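/- Assume λ₁ > μ₁ and the coexistence condition. Let n : [0,∞) → ℝ⁴ be differentiable with n'(t) = F(n(t)) for all t ≥ 0 and n(0) ∈ (0,∞)⁴. Then for each coordinate j ∈ {1a, 1d, 1i, 2} one has liminf_{t→∞} n_j(t) > 0 (uniform strong persistence). -/

import Mathlib

open Filter

/-- The host–virus vector field in coordinates `(n₁ₐ, n₁d, n₁ᵢ, n₂)`. -/
noncomputable def hostVirusField (lam mu C D q kap sig r v mu2 m : ℝ)
    (n : Fin 4 → ℝ) : Fin 4 → ℝ :=
  ![n 0 * (lam - mu - C * (n 0 + n 1 + n 2) - D * n 3) + sig * n 1 + r * n 2,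
    q * D * n 0 * n 3 - (kap * mu + sig) * n 1,
    (1 - q) * D * n 0 * n 3 - (r + v) * n 2,
    m * v * n 2 - (1 - q) * D * n 0 * n 3 - mu2 * n 3]

open Set Topology Filter


/-- Monotonicity from a nonnegative derivative on an interval. -/
lemma ode_mono (f F : ℝ → ℝ) (a b : ℝ) (hab : a ≤ b)
    (hf : ∀ u ∈ Icc a b, HasDerivAt f (F u) u)
    (hF : ∀ u ∈ Ioo a b, 0 ≤ F u) : f a ≤ f b := by
  have hc : ContinuousOn f (Icc a b) := fun u hu => (hf u hu).continuousAt.continuousWithinAt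
  have hd : DifferentiableOn ℝ f (interior (Icc a b)) := by
    intro u hu
    rw [interior_Icc] at hu
    exact ((hf u (Ioo_subset_Icc_self hu)).differentiableAt).differentiableWithinAt
  have := monotoneOn_of_deriv_nonneg (convex_Icc a b) hc hd (fun u hu => by
    rw [interior_Icc] at hu
    rw [(hf u (Ioo_subset_Icc_self hu)).deriv]
    exact hF u hu)
  exact this (left_mem_Icc.2 hab) (right_mem_Icc.2 hab) hab

lemma ode_anti (f F : ℝ → ℝ) (a b : ℝ) (hab : a ≤ b)
    (hf : ∀ u ∈ Icc a b, HasDerivAt f (F u) u)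
    (hF : ∀ u ∈ Ioo a b, F u ≤ 0) : f b ≤ f a := by
  have := ode_mono (fun u => -f u) (fun u => -F u) a b hab
    (fun u hu => (hf u hu).neg) (fun u hu => by simpa using hF u hu)
  linarith

/-- Exponential lower bound: if `f' ≥ -K f` on `[a,b]` then `f b ≥ e^{K(a-b)} f a`. -/
lemma ode_exp_lower (f F : ℝ → ℝ) (a b K : ℝ) (hab : a ≤ b)
    (hf : ∀ u ∈ Icc a b, HasDerivAt f (F u) u)
    (hF : ∀ u ∈ Ioo a b, -K * f u ≤ F u) :
    Real.exp (K * (a - b)) * f a ≤ f b := by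
  have hg : ∀ u ∈ Icc a b, HasDerivAt (fun s => Real.exp (K * s) * f s)
      (Real.exp (K * u) * (K * f u + F u)) u := by
    intro u hu
    have h1 : HasDerivAt (fun s : ℝ => Real.exp (K * s)) (K * Real.exp (K * u)) u := by
      simpa [mul_comm, Function.comp_def] using (Real.hasDerivAt_exp (K * u)).comp u ((hasDerivAt_id u).const_mul K)
    have := h1.mul (hf u hu)
    exact this.congr_deriv (by ring)
  have hmono := ode_mono _ _ a b hab hg (fun u hu => by
    have := hF u hu
    have hpos := Real.exp_pos (K * u)
    nlinarith)
  have hea : Real.exp (K * a) = Real.exp (K * b) * Real.exp (K * (a - b)) := by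
    rw [← Real.exp_add]; ring_nf
  have hb := Real.exp_pos (K * b)
  rw [hea] at hmono
  nlinarith [hmono]

/-- Exponential decay with constant input: if `f' ≤ -α f + c` on `[a,b]`, `α>0`, then
`f b ≤ c/α + (f a - c/α) e^{α(a-b)}`. -/
lemma ode_exp_upper (f F : ℝ → ℝ) (a b α c : ℝ) (hab : a ≤ b) (hα : 0 < α)
    (hf : ∀ u ∈ Icc a b, HasDerivAt f (F u) u)
    (hF : ∀ u ∈ Ioo a b, F u ≤ -α * f u + c) :
    f b ≤ c / α + (f a - c / α) * Real.exp (α * (a - b)) := by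
  have hg : ∀ u ∈ Icc a b, HasDerivAt (fun s => Real.exp (α * s) * (f s - c / α))
      (Real.exp (α * u) * (α * (f u - c / α) + F u)) u := by
    intro u hu
    have h1 : HasDerivAt (fun s : ℝ => Real.exp (α * s)) (α * Real.exp (α * u)) u := by
      simpa [mul_comm, Function.comp_def] using (Real.hasDerivAt_exp (α * u)).comp u ((hasDerivAt_id u).const_mul α)
    have := h1.mul ((hf u hu).sub_const (c / α))
    exact this.congr_deriv (by ring)
  have hanti := ode_anti _ _ a b hab hg (fun u hu => by
    have := hF u hu
    have hpos := Real.exp_pos (α * u)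
    have hca : α * (c / α) = c := by field_simp
    nlinarith)
  have hea : Real.exp (α * a) = Real.exp (α * b) * Real.exp (α * (a - b)) := by
    rw [← Real.exp_add]; ring_nf
  have hb := Real.exp_pos (α * b)
  rw [hea] at hanti
  nlinarith [hanti]

/-- Barrier from above: if `f' ≤ 0` whenever `f ≥ R` (for `t ≥ T`), then
`f t ≤ max (f T) R` for all `t ≥ T`. -/
lemma ode_barrier_up (f F : ℝ → ℝ) (T R : ℝ)
    (hf : ∀ t, T ≤ t → HasDerivAt f (F t) t)
    (h : ∀ t, T ≤ t → R ≤ f t → F t ≤ 0) :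
    ∀ t, T ≤ t → f t ≤ max (f T) R := by
  intro t hTt
  by_contra hcon
  push_neg at hcon
  have hcont : ContinuousOn f (Icc T t) := fun u hu => (hf u hu.1).continuousAt.continuousWithinAt
  have hScl : IsClosed (Icc T t ∩ f ⁻¹' (Iic (max (f T) R))) :=
    hcont.preimage_isClosed_of_isClosed isClosed_Icc isClosed_Iic
  have hSne : (Icc T t ∩ f ⁻¹' (Iic (max (f T) R))).Nonempty :=
    ⟨T, ⟨left_mem_Icc.2 hTt, by simp⟩⟩
  have hSbdd : BddAbove (Icc T t ∩ f ⁻¹' (Iic (max (f T) R))) := ⟨t, fun u hu => hu.1.2⟩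
  obtain ⟨⟨hTs, hst'⟩, hsle⟩ : sSup (Icc T t ∩ f ⁻¹' (Iic (max (f T) R))) ∈
      (Icc T t ∩ f ⁻¹' (Iic (max (f T) R))) := hScl.csSup_mem hSne hSbdd
  set s := sSup (Icc T t ∩ f ⁻¹' (Iic (max (f T) R))) with hs
  have hsle' : f s ≤ max (f T) R := hsle
  have hst : s ≤ t := hst'
  have hanti := ode_anti f F s t hst (fun u hu => hf u (hTs.trans hu.1)) (fun u hu => by
    have hfu : max (f T) R < f u := by
      by_contra hle
      push_neg at hle
      have hmem : u ∈ Icc T t ∩ f ⁻¹' (Iic (max (f T) R)) :=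
        ⟨⟨hTs.trans hu.1.le, hu.2.le⟩, hle⟩
      exact absurd (le_csSup hSbdd hmem) (not_le.2 hu.1)
    exact h u (hTs.trans hu.1.le) ((le_max_right _ _).trans hfu.le))
  exact absurd (hanti.trans hsle') (not_le.2 hcon)

/-- Reach-and-stay: if `f' ≥ c > 0` whenever `f ≤ ℓ` (on `[a,b]`), `f a ≥ 0`, and
`b ≥ a + ℓ/c`, then `f b ≥ ℓ`. -/
lemma ode_reach (f F : ℝ → ℝ) (a b c ℓ : ℝ) (hc : 0 < c) (h0 : 0 ≤ f a)
    (hab : a ≤ b) (hb : a + ℓ / c ≤ b)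
    (hf : ∀ u ∈ Icc a b, HasDerivAt f (F u) u)
    (hstep : ∀ u ∈ Icc a b, f u ≤ ℓ → c ≤ F u) :
    ℓ ≤ f b := by
  by_contra hcon
  push_neg at hcon
  by_cases hex : ∃ u ∈ Icc a b, ℓ ≤ f u
  · -- last time at or above ℓ; afterwards f < ℓ so f' > 0, so f b ≥ ℓ
    have hcont : ContinuousOn f (Icc a b) := fun u hu => (hf u hu).continuousAt.continuousWithinAt
    have hScl : IsClosed (Icc a b ∩ f ⁻¹' (Ici ℓ)) :=
      hcont.preimage_isClosed_of_isClosed isClosed_Icc isClosed_Ici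
    obtain ⟨u₀, hu₀, hu₀f⟩ := hex
    have hSne : (Icc a b ∩ f ⁻¹' (Ici ℓ)).Nonempty := ⟨u₀, hu₀, hu₀f⟩
    have hSbdd : BddAbove (Icc a b ∩ f ⁻¹' (Ici ℓ)) := ⟨b, fun u hu => hu.1.2⟩
    obtain ⟨⟨has, hsb⟩, hsf⟩ : sSup (Icc a b ∩ f ⁻¹' (Ici ℓ)) ∈ (Icc a b ∩ f ⁻¹' (Ici ℓ)) :=
      hScl.csSup_mem hSne hSbdd
    set s := sSup (Icc a b ∩ f ⁻¹' (Ici ℓ)) with hs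
    have hmono := ode_mono f F s b hsb (fun u hu => hf u ⟨has.trans hu.1, hu.2⟩)
      (fun u hu => by
        have hfu : f u < ℓ := by
          by_contra hle
          push_neg at hle
          have hmem : u ∈ Icc a b ∩ f ⁻¹' (Ici ℓ) := ⟨⟨has.trans hu.1.le, hu.2.le⟩, hle⟩
          exact absurd (le_csSup hSbdd hmem) (not_le.2 hu.1)
        exact hc.le.trans (hstep u ⟨has.trans hu.1.le, hu.2.le⟩ hfu.le))
    have hsf' : ℓ ≤ f s := hsf
    exact absurd (hsf'.trans hmono) (not_le.2 hcon)
  · push_neg at hex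
    have hmono := ode_mono (fun u => f u - c * u) (fun u => F u - c) a b hab
      (fun u hu => (hf u hu).sub (by simpa using (hasDerivAt_id u).const_mul c))
      (fun u hu => by
        have := hstep u (Ioo_subset_Icc_self hu) (hex u (Ioo_subset_Icc_self hu)).le
        linarith)
    have hcb : c * (ℓ / c) = ℓ := by field_simp
    nlinarith [hmono]

/-- Delayed-repeller lemma: if `f' ≥ -K f` always, and `f' ≥ 0` at any time `t` which is
preceded by a period of length `T₀` during which `f ≤ δ`, then `f` stays above
`min (f T) δ * e^{-K T₀}` forever. -/
lemma ode_repeller (f F : ℝ → ℝ) (T δ K T₀ : ℝ) (hδ : 0 < δ) (hK : 0 ≤ K) (hT₀ : 0 ≤ T₀)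
    (hf : ∀ t, T ≤ t → HasDerivAt f (F t) t)
    (hfT : 0 < f T)
    (hfpos : ∀ t, T ≤ t → 0 ≤ f t)
    (hlow : ∀ t, T ≤ t → -K * f t ≤ F t)
    (hii : ∀ s t, T ≤ s → s + T₀ ≤ t → (∀ u ∈ Icc s t, f u ≤ δ) → 0 ≤ F t) :
    ∀ t, T ≤ t → min (f T) δ * Real.exp (-(K * T₀)) ≤ f t := by
  intro t hTt
  have hm : 0 < min (f T) δ := lt_min hfT hδ
  have hexple : Real.exp (-(K * T₀)) ≤ 1 := Real.exp_le_one_iff.2 (by nlinarith)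
  -- generic "tail" argument from a starting time s with f s ≥ m', f ≤ δ on [s,t]
  have tail : ∀ s, T ≤ s → s ≤ t → min (f T) δ ≤ f s → (∀ u ∈ Icc s t, f u ≤ δ) →
      min (f T) δ * Real.exp (-(K * T₀)) ≤ f t := by
    intro s hTs hst hfs hbelow
    by_cases hcase : t ≤ s + T₀
    · -- short interval: exponential lower bound suffices
      have h1 := ode_exp_lower f F s t K hst (fun u hu => hf u (hTs.trans hu.1))
        (fun u hu => hlow u (hTs.trans hu.1.le))
      have h2 : Real.exp (-(K * T₀)) ≤ Real.exp (K * (s - t)) :=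
        Real.exp_le_exp.2 (by nlinarith)
      nlinarith [hfs, hm.le, Real.exp_pos (K * (s - t)), Real.exp_pos (-(K * T₀))]
    · push_neg at hcase
      -- on [s, s+T₀]: exponential bound; on [s+T₀, t]: monotone
      have hstep1 := ode_exp_lower f F s (s + T₀) K (by linarith)
        (fun u hu => hf u (hTs.trans hu.1))
        (fun u hu => hlow u (hTs.trans hu.1.le))
      have hstep2 := ode_mono f F (s + T₀) t (by linarith)
        (fun u hu => hf u (by linarith [hu.1]))
        (fun u hu => hii s u hTs hu.1.le (fun w hw => hbelow w ⟨hw.1, hw.2.trans hu.2.le⟩))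
      have hsimp : K * (s - (s + T₀)) = -(K * T₀) := by ring
      rw [hsimp] at hstep1
      nlinarith [Real.exp_pos (-(K * T₀))]
  by_cases hex : ∃ u ∈ Icc T t, δ ≤ f u
  · -- last time ≥ δ
    have hcont : ContinuousOn f (Icc T t) := fun u hu => (hf u hu.1).continuousAt.continuousWithinAt
    have hScl : IsClosed (Icc T t ∩ f ⁻¹' (Ici δ)) :=
      hcont.preimage_isClosed_of_isClosed isClosed_Icc isClosed_Ici
    obtain ⟨u₀, hu₀, hu₀f⟩ := hex
    have hSne : (Icc T t ∩ f ⁻¹' (Ici δ)).Nonempty := ⟨u₀, hu₀, hu₀f⟩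
    have hSbdd : BddAbove (Icc T t ∩ f ⁻¹' (Ici δ)) := ⟨t, fun u hu => hu.1.2⟩
    obtain ⟨s, ⟨⟨hTs, hst⟩, hsf⟩, hsmax⟩ :
        ∃ s, s ∈ (Icc T t ∩ f ⁻¹' (Ici δ)) ∧ ∀ u ∈ (Icc T t ∩ f ⁻¹' (Ici δ)), u ≤ s :=
      ⟨_, hScl.csSup_mem hSne hSbdd, fun u hu => le_csSup hSbdd hu⟩
    have hsf' : δ ≤ f s := hsf
    have hafter : ∀ u, s < u → u ≤ t → f u < δ := by
      intro u hsu hut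
      by_contra hle
      push_neg at hle
      have hmem : u ∈ Icc T t ∩ f ⁻¹' (Ici δ) := ⟨⟨hTs.trans hsu.le, hut⟩, hle⟩
      exact absurd (hsmax u hmem) (not_le.2 hsu)
    rcases eq_or_lt_of_le hst with rfl | hslt
    · -- s = t : f t ≥ δ
      calc min (f T) δ * Real.exp (-(K * T₀)) ≤ δ * 1 := by
            nlinarith [Real.exp_pos (-(K * T₀)), min_le_right (f T) δ, hm]
        _ ≤ f s := by linarith
    · -- f s = δ by continuity from the right
      have hsδ : f s ≤ δ := by
        have hcont' : ContinuousWithinAt f (Ioi s) s :=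
          ((hf s hTs).continuousAt).continuousWithinAt
        have hne : (𝓝[>] s).NeBot := nhdsGT_neBot s
        have hev : ∀ᶠ u in 𝓝[>] s, f u ≤ δ := by
          filter_upwards [Ioo_mem_nhdsGT_of_mem (by exact ⟨le_refl s, hslt⟩ : s ∈ Ico s t)]
            with u hu
          exact (hafter u hu.1 hu.2.le).le
        exact le_of_tendsto hcont' hev
      have hbelow : ∀ u ∈ Icc s t, f u ≤ δ := by
        intro u hu
        rcases eq_or_lt_of_le hu.1 with rfl | h'
        · exact hsδ
        · exact (hafter u h' hu.2).le
      exact tail s hTs hst (le_trans (min_le_right _ _) hsf') hbelow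
  · push_neg at hex
    exact tail T le_rfl hTt (min_le_left _ _) (fun u hu => (hex u hu).le)

set_option maxHeartbeats 1000000 in
lemma positivity_aux (lam mu C D q kap sig r v mu2 m : ℝ)
    (hmu : 0 < mu) (hlm : mu < lam) (hC : 0 < C) (hD : 0 < D)
    (hq0 : 0 < q) (hq1 : q < 1) (hkap : 0 ≤ kap) (hsig : 0 < sig)
    (hr : 0 < r) (hv : 0 < v) (hmu2 : 0 < mu2) (hm : 0 < m)
    (n : ℝ → (Fin 4 → ℝ))
    (hcont : ∀ i, ∀ t : ℝ, 0 ≤ t → ContinuousAt (fun s => n s i) t)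
    (hx : ∀ t, 0 ≤ t → HasDerivAt (fun s => n s 0)
      (n t 0 * (lam - mu - C * (n t 0 + n t 1 + n t 2) - D * n t 3) + sig * n t 1 + r * n t 2) t)
    (hy : ∀ t, 0 ≤ t → HasDerivAt (fun s => n s 1)
      (q * D * n t 0 * n t 3 - (kap * mu + sig) * n t 1) t)
    (hz : ∀ t, 0 ≤ t → HasDerivAt (fun s => n s 2)
      ((1 - q) * D * n t 0 * n t 3 - (r + v) * n t 2) t)
    (hw : ∀ t, 0 ≤ t → HasDerivAt (fun s => n s 3)
      (m * v * n t 2 - (1 - q) * D * n t 0 * n t 3 - mu2 * n t 3) t)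
    (hinit : ∀ i, 0 < n 0 i) :
    ∀ t, 0 ≤ t → ∀ i, 0 < n t i := by
  by_contra hcon
  push_neg at hcon
  obtain ⟨t₀, ht₀, i₀, hi₀⟩ := hcon
  set g : ℝ → ℝ := fun t => min (min (n t 0) (n t 1)) (min (n t 2) (n t 3)) with hg
  have hgle : ∀ t i, g t ≤ n t i := by
    intro t i
    fin_cases i
    · exact (min_le_left _ _).trans (min_le_left _ _)
    · exact (min_le_left _ _).trans (min_le_right _ _)
    · exact (min_le_right _ _).trans (min_le_left _ _)
    · exact (min_le_right _ _).trans (min_le_right _ _)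
  have hgpos_iff : ∀ t, (∀ i, 0 < n t i) → 0 < g t := by
    intro t h
    exact lt_min (lt_min (h 0) (h 1)) (lt_min (h 2) (h 3))
  have hgcont : ContinuousOn g (Ici 0) := by
    intro t ht
    exact ((((hcont 0 t ht).continuousWithinAt).min ((hcont 1 t ht).continuousWithinAt)).min
      (((hcont 2 t ht).continuousWithinAt).min ((hcont 3 t ht).continuousWithinAt)))
  have hScl : IsClosed (Ici (0:ℝ) ∩ g ⁻¹' (Iic 0)) :=
    hgcont.preimage_isClosed_of_isClosed isClosed_Ici isClosed_Iic
  have hSne : (Ici (0:ℝ) ∩ g ⁻¹' (Iic 0)).Nonempty :=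
    ⟨t₀, ht₀, (hgle t₀ i₀).trans hi₀⟩
  have hSbdd : BddBelow (Ici (0:ℝ) ∩ g ⁻¹' (Iic 0)) := ⟨0, fun u hu => hu.1⟩
  obtain ⟨T, ⟨hT0, hTg⟩, hTmin⟩ : ∃ T, T ∈ (Ici (0:ℝ) ∩ g ⁻¹' (Iic 0)) ∧
      ∀ u ∈ (Ici (0:ℝ) ∩ g ⁻¹' (Iic 0)), T ≤ u :=
    ⟨_, hScl.csInf_mem hSne hSbdd, fun u hu => csInf_le hSbdd hu⟩
  have hTg' : g T ≤ 0 := hTg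
  have hTpos : 0 < T := by
    rcases eq_or_lt_of_le (mem_Ici.1 hT0) with rfl | h
    · exact absurd (hgpos_iff 0 hinit) (not_lt.2 hTg')
    · exact h
  have hbefore : ∀ u, 0 ≤ u → u < T → ∀ i, 0 < n u i := by
    intro u hu huT i
    have hune : u ∉ (Ici (0:ℝ) ∩ g ⁻¹' (Iic 0)) := fun hmem => absurd (hTmin u hmem) (not_le.2 huT)
    have : ¬ g u ≤ 0 := fun h => hune ⟨hu, h⟩
    exact lt_of_lt_of_le (not_le.1 this) (hgle u i)
  have hnn : ∀ u ∈ Icc (0:ℝ) T, ∀ i, 0 ≤ n u i := by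
    intro u hu i
    rcases eq_or_lt_of_le hu.2 with rfl | h
    · -- u = T : take limit from the left
      have htend : Filter.Tendsto (fun s => n s i) (𝓝[<] u) (𝓝 (n u i)) :=
        ((hcont i u hu.1).continuousWithinAt)
      have hev : ∀ᶠ s in 𝓝[<] u, 0 ≤ n s i := by
        filter_upwards [Ioo_mem_nhdsLT_of_mem (⟨hTpos, le_refl u⟩ : u ∈ Ioc (0:ℝ) u)] with s hs
        exact (hbefore s hs.1.le hs.2 i).le
      exact ge_of_tendsto htend hev
    · exact (hbefore u hu.1 h i).le
  -- bound on the compact interval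
  have hbd : ∀ i : Fin 4, ∃ Mi : ℝ, ∀ u ∈ Icc (0:ℝ) T, n u i ≤ Mi := by
    intro i
    obtain ⟨Mi, hMi⟩ := isCompact_Icc.exists_bound_of_continuousOn
      (fun u hu => ((hcont i u hu.1).continuousWithinAt))
    exact ⟨Mi, fun u hu => le_trans (le_abs_self _) (by simpa using hMi u hu)⟩
  obtain ⟨M0, hM0⟩ := hbd 0
  obtain ⟨M1, hM1⟩ := hbd 1
  obtain ⟨M2, hM2⟩ := hbd 2
  obtain ⟨M3, hM3⟩ := hbd 3
  set M := max (max (max M0 M1) (max M2 M3)) 0 with hM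
  have hMnn : 0 ≤ M := le_max_right _ _
  have hMb : ∀ u ∈ Icc (0:ℝ) T, ∀ i, n u i ≤ M := by
    intro u hu i
    fin_cases i
    · exact (hM0 u hu).trans ((le_max_left _ _).trans ((le_max_left _ _).trans (le_max_left _ _)))
    · exact (hM1 u hu).trans ((le_max_right _ _).trans ((le_max_left _ _).trans (le_max_left _ _)))
    · exact (hM2 u hu).trans ((le_max_left _ _).trans ((le_max_right _ _).trans (le_max_left _ _)))
    · exact (hM3 u hu).trans ((le_max_right _ _).trans ((le_max_right _ _).trans (le_max_left _ _)))
  set K := (kap * mu + sig) + (r + v) + ((1 - q) * D * M + mu2) + (C * (3 * M) + D * M) with hK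
  have hfin : ∀ i, 0 < n T i := by
    have key : ∀ (i : Fin 4) (F : ℝ → ℝ),
        (∀ u ∈ Icc (0:ℝ) T, HasDerivAt (fun s => n s i) (F u) u) →
        (∀ u ∈ Ioo (0:ℝ) T, -K * n u i ≤ F u) → 0 < n T i := by
      intro i F hfd hineq
      have := ode_exp_lower (fun s => n s i) F 0 T K hTpos.le hfd hineq
      have he := Real.exp_pos (K * (0 - T))
      linarith [this, mul_pos he (hinit i)]
    have haux : ∀ u ∈ Ioo (0:ℝ) T,
        (0 ≤ (1-q)*D*M ∧ 0 ≤ C*(3*M) ∧ 0 ≤ D*M ∧ 0 ≤ kap*mu) ∧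
        (C * n u 0 ≤ C * M ∧ C * n u 1 ≤ C * M ∧ C * n u 2 ≤ C * M ∧ D * n u 3 ≤ D * M) := by
      intro u hu
      have hu' : u ∈ Icc (0:ℝ) T := ⟨hu.1.le, hu.2.le⟩
      have h1q : (0:ℝ) ≤ 1 - q := by linarith
      refine ⟨⟨by positivity, by positivity, by positivity, mul_nonneg hkap hmu.le⟩,
        mul_le_mul_of_nonneg_left (hMb u hu' 0) hC.le,
        mul_le_mul_of_nonneg_left (hMb u hu' 1) hC.le,
        mul_le_mul_of_nonneg_left (hMb u hu' 2) hC.le,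
        mul_le_mul_of_nonneg_left (hMb u hu' 3) hD.le⟩
    intro i
    fin_cases i
    · refine key 0 _ (fun u hu => hx u hu.1) ?_
      intro u hu
      obtain ⟨⟨e1, e2, e3, e5⟩, f0, f1, f2, f3⟩ := haux u hu
      have h0 := hbefore u hu.1.le hu.2 0
      have h1 := hbefore u hu.1.le hu.2 1
      have h2 := hbefore u hu.1.le hu.2 2
      have hKge : C * (n u 0 + n u 1 + n u 2) + D * n u 3 ≤ K := by
        rw [hK]; linarith
      have hp1 : 0 ≤ n u 0 * (K - (C * (n u 0 + n u 1 + n u 2) + D * n u 3)) :=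
        mul_nonneg h0.le (sub_nonneg.2 hKge)
      have hp2 : 0 ≤ n u 0 * (lam - mu) := mul_nonneg h0.le (by linarith)
      linarith [mul_pos hsig h1, mul_pos hr h2, hp1, hp2]
    · refine key 1 _ (fun u hu => hy u hu.1) ?_
      intro u hu
      obtain ⟨⟨e1, e2, e3, e5⟩, f0, f1, f2, f3⟩ := haux u hu
      have h0 := hbefore u hu.1.le hu.2 0
      have h1 := hbefore u hu.1.le hu.2 1
      have h3 := hbefore u hu.1.le hu.2 3
      have hq1' : 0 ≤ q * D * n u 0 * n u 3 := by positivity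
      have hKy : 0 ≤ (K - (kap * mu + sig)) * n u 1 := by
        refine mul_nonneg ?_ h1.le
        rw [hK]; linarith
      linarith [hKy, hq1']
    · refine key 2 _ (fun u hu => hz u hu.1) ?_
      intro u hu
      obtain ⟨⟨e1, e2, e3, e5⟩, f0, f1, f2, f3⟩ := haux u hu
      have h0 := hbefore u hu.1.le hu.2 0
      have h2 := hbefore u hu.1.le hu.2 2
      have h3 := hbefore u hu.1.le hu.2 3
      have h1q : (0:ℝ) ≤ 1 - q := by linarith
      have hq1' : 0 ≤ (1 - q) * D * n u 0 * n u 3 := by positivity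
      have hKz : 0 ≤ (K - (r + v)) * n u 2 := by
        refine mul_nonneg ?_ h2.le
        rw [hK]; linarith
      linarith [hKz, hq1']
    · refine key 3 _ (fun u hu => hw u hu.1) ?_
      intro u hu
      obtain ⟨⟨e1, e2, e3, e5⟩, f0, f1, f2, f3⟩ := haux u hu
      have h0 := hbefore u hu.1.le hu.2 0
      have h2 := hbefore u hu.1.le hu.2 2
      have h3 := hbefore u hu.1.le hu.2 3
      have hu' : u ∈ Icc (0:ℝ) T := ⟨hu.1.le, hu.2.le⟩
      have h1q : (0:ℝ) ≤ 1 - q := by linarith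
      have hmz : 0 ≤ m * v * n u 2 := by positivity
      have hxw : (1 - q) * D * n u 0 * n u 3 ≤ (1-q)*D*M * n u 3 := by
        have e4 : (1 - q) * D * n u 0 ≤ (1-q)*D*M :=
          mul_le_mul_of_nonneg_left (hMb u hu' 0) (by positivity)
        exact mul_le_mul_of_nonneg_right e4 h3.le
      have hKw : 0 ≤ (K - mu2 - (1-q)*D*M) * n u 3 := by
        refine mul_nonneg ?_ h3.le
        rw [hK]; linarith
      linarith [hKw, hmz, hxw]
  exact absurd (hgpos_iff T hfin) (not_lt.2 hTg')

set_option maxHeartbeats 1000000 in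
lemma bounds_aux (lam mu C D q kap sig r v mu2 m : ℝ)
    (hmu : 0 < mu) (hlm : mu < lam) (hC : 0 < C) (hD : 0 < D)
    (hq0 : 0 < q) (hq1 : q < 1) (hkap : 0 ≤ kap) (hsig : 0 < sig)
    (hr : 0 < r) (hv : 0 < v) (hmu2 : 0 < mu2) (hm : 0 < m)
    (n : ℝ → (Fin 4 → ℝ))
    (hx : ∀ t, 0 ≤ t → HasDerivAt (fun s => n s 0)
      (n t 0 * (lam - mu - C * (n t 0 + n t 1 + n t 2) - D * n t 3) + sig * n t 1 + r * n t 2) t)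
    (hy : ∀ t, 0 ≤ t → HasDerivAt (fun s => n s 1)
      (q * D * n t 0 * n t 3 - (kap * mu + sig) * n t 1) t)
    (hz : ∀ t, 0 ≤ t → HasDerivAt (fun s => n s 2)
      ((1 - q) * D * n t 0 * n t 3 - (r + v) * n t 2) t)
    (hw : ∀ t, 0 ≤ t → HasDerivAt (fun s => n s 3)
      (m * v * n t 2 - (1 - q) * D * n t 0 * n t 3 - mu2 * n t 3) t)
    (hpos : ∀ t, 0 ≤ t → ∀ i, 0 < n t i) :
    ∃ B : ℝ, 0 < B ∧ ∀ t, 0 ≤ t → ∀ i, n t i ≤ B := by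
  have hN : ∀ t, 0 ≤ t → HasDerivAt (fun s => n s 0 + n s 1 + n s 2)
      (n t 0 * (lam - mu - C * (n t 0 + n t 1 + n t 2)) - kap * mu * n t 1 - v * n t 2) t := by
    intro t ht
    have := ((hx t ht).add (hy t ht)).add (hz t ht)
    exact this.congr_deriv (by ring)
  set R : ℝ := (lam - mu + 1) / C with hR
  have hCR : C * R = lam - mu + 1 := by
    rw [hR]; field_simp
  have hNB := ode_barrier_up (fun s => n s 0 + n s 1 + n s 2) _ 0 R hN (by
    intro t ht hRt
    have h0 := hpos t ht 0
    have h1 := hpos t ht 1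
    have h2 := hpos t ht 2
    have hCN : lam - mu + 1 ≤ C * (n t 0 + n t 1 + n t 2) := by
      rw [← hCR]
      exact mul_le_mul_of_nonneg_left hRt hC.le
    have : n t 0 * (lam - mu - C * (n t 0 + n t 1 + n t 2)) ≤ n t 0 * (-1) :=
      mul_le_mul_of_nonneg_left (by linarith) h0.le
    nlinarith [mul_nonneg (mul_nonneg hkap hmu.le) h1.le, mul_pos hv h2])
  set B₁ : ℝ := max (n 0 0 + n 0 1 + n 0 2) R with hB₁
  have hB₁pos : 0 < B₁ := by
    have a0 := hpos 0 le_rfl 0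
    have a1 := hpos 0 le_rfl 1
    have a2 := hpos 0 le_rfl 2
    have hle : n 0 0 + n 0 1 + n 0 2 ≤ B₁ := le_max_left _ _
    linarith
  have hNB' : ∀ t, 0 ≤ t → n t 0 + n t 1 + n t 2 ≤ B₁ := fun t ht => hNB t ht
  set R₂ : ℝ := m * v * B₁ / mu2 with hR₂
  have hmR₂ : mu2 * R₂ = m * v * B₁ := by rw [hR₂]; field_simp
  have hwB := ode_barrier_up (fun s => n s 3) _ 0 R₂ hw (by
    intro t ht hRt
    have h0 := hpos t ht 0
    have h2 := hpos t ht 2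
    have h3 := hpos t ht 3
    have hzB : n t 2 ≤ B₁ := by have := hNB' t ht; have := hpos t ht 0; have := hpos t ht 1; linarith
    have hxw : 0 ≤ (1 - q) * D * n t 0 * n t 3 := by
      have : (0:ℝ) < 1 - q := by linarith
      positivity
    have hmvz : m * v * n t 2 ≤ m * v * B₁ := mul_le_mul_of_nonneg_left hzB (by positivity)
    have hmuw : m * v * B₁ ≤ mu2 * n t 3 := by
      rw [← hmR₂]; exact mul_le_mul_of_nonneg_left hRt hmu2.le
    linarith)
  set B₂ : ℝ := max (n 0 3) R₂ with hB₂
  refine ⟨max B₁ B₂, lt_of_lt_of_le hB₁pos (le_max_left _ _), ?_⟩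
  intro t ht i
  have h0 := hpos t ht 0
  have h1 := hpos t ht 1
  have h2 := hpos t ht 2
  have hN' := hNB' t ht
  fin_cases i
  · show n t 0 ≤ max B₁ B₂
    exact le_trans (by linarith) (le_max_left B₁ B₂)
  · show n t 1 ≤ max B₁ B₂
    exact le_trans (by linarith) (le_max_left B₁ B₂)
  · show n t 2 ≤ max B₁ B₂
    exact le_trans (by linarith) (le_max_left B₁ B₂)
  · show n t 3 ≤ max B₁ B₂
    exact le_trans (hwB t ht) (le_max_right B₁ B₂)

set_option maxHeartbeats 2000000 in
lemma host_persist (lam mu C D q kap sig r v mu2 m : ℝ)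
    (hmu : 0 < mu) (hlm : mu < lam) (hC : 0 < C) (hD : 0 < D)
    (hq0 : 0 < q) (hq1 : q < 1) (hkap : 0 ≤ kap) (hsig : 0 < sig)
    (hr : 0 < r) (hv : 0 < v) (hmu2 : 0 < mu2) (hm : 0 < m)
    (n : ℝ → (Fin 4 → ℝ))
    (hx : ∀ t, 0 ≤ t → HasDerivAt (fun s => n s 0)
      (n t 0 * (lam - mu - C * (n t 0 + n t 1 + n t 2) - D * n t 3) + sig * n t 1 + r * n t 2) t)
    (hy : ∀ t, 0 ≤ t → HasDerivAt (fun s => n s 1)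
      (q * D * n t 0 * n t 3 - (kap * mu + sig) * n t 1) t)
    (hz : ∀ t, 0 ≤ t → HasDerivAt (fun s => n s 2)
      ((1 - q) * D * n t 0 * n t 3 - (r + v) * n t 2) t)
    (hw : ∀ t, 0 ≤ t → HasDerivAt (fun s => n s 3)
      (m * v * n t 2 - (1 - q) * D * n t 0 * n t 3 - mu2 * n t 3) t)
    (hpos : ∀ t, 0 ≤ t → ∀ i, 0 < n t i)
    (B : ℝ) (hB : 0 < B) (hbd : ∀ t, 0 ≤ t → ∀ i, n t i ≤ B) :
    ∃ eps0 : ℝ, 0 < eps0 ∧ ∀ t, 0 ≤ t → eps0 ≤ n t 0 := by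
  have hlm' : (0:ℝ) < lam - mu := by linarith
  have h1q : (0:ℝ) < 1 - q := by linarith
  -- constants
  set p : ℝ := m * v / (r + v) + 1 with hpdef
  have hp1 : 1 < p := by
    have h : 0 < m * v / (r + v) := by positivity
    simp only [hpdef]; linarith
  have hp0 : 0 < p := by linarith
  have hpm1 : 0 < p - 1 := by linarith
  set al : ℝ := min ((r + v) / p) (mu2 / 2) with haldef
  have hal : 0 < al := lt_min (by positivity) (by positivity)
  set U : ℝ := (p + 1) * B with hUdef
  have hU : 0 < U := by positivity
  set E : ℝ := (lam - mu) / 2 with hEdef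
  have hE : 0 < E := by positivity
  set eps1 : ℝ := min (E / (3 * (C + D))) (sig * E / (6 * C * (q * D * B + 1))) with heps1def
  have heps1 : 0 < eps1 := lt_min (by positivity) (by positivity)
  set EY : ℝ := E / (6 * C) with hEYdef
  have hEY : 0 < EY := by positivity
  have hAden : 0 < (p - 1) * (1 - q) * D := mul_pos (mul_pos hpm1 h1q) hD
  set del : ℝ := min (mu2 / (2 * ((p - 1) * (1 - q) * D))) ((lam - mu) / (4 * C)) with hdeldef
  have hdel : 0 < del := lt_min (div_pos hmu2 (by linarith)) (by positivity)
  set D1 : ℝ := Real.log ((U + eps1) / eps1) / al with hD1def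
  have hD1 : 0 ≤ D1 := by
    apply div_nonneg _ hal.le
    apply Real.log_nonneg
    rw [le_div_iff₀ heps1]
    linarith
  set D2 : ℝ := Real.log ((B + EY) / EY) / sig with hD2def
  have hD2 : 0 ≤ D2 := by
    apply div_nonneg _ hsig.le
    apply Real.log_nonneg
    rw [le_div_iff₀ hEY]
    linarith
  set T0 : ℝ := D1 + D2 with hT0def
  have hT0 : 0 ≤ T0 := by simp only [hT0def]; linarith
  set Kx : ℝ := 3 * C * B + D * B with hKxdef
  have hKx : 0 ≤ Kx := by positivity
  clear_value Kx T0 D2 D1 del EY eps1 E U al p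
  -- the lower-decay bound for x, valid always
  have hlow : ∀ t, 0 ≤ t → -Kx * n t 0 ≤
      n t 0 * (lam - mu - C * (n t 0 + n t 1 + n t 2) - D * n t 3) + sig * n t 1 + r * n t 2 := by
    intro t ht
    have h0 := hpos t ht 0; have h1 := hpos t ht 1
    have h2 := hpos t ht 2; have h3 := hpos t ht 3
    have hsum : C * (n t 0 + n t 1 + n t 2) + D * n t 3 ≤ Kx := by
      have e0 : C * n t 0 ≤ C * B := mul_le_mul_of_nonneg_left (hbd t ht 0) hC.le
      have e1 : C * n t 1 ≤ C * B := mul_le_mul_of_nonneg_left (hbd t ht 1) hC.le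
      have e2 : C * n t 2 ≤ C * B := mul_le_mul_of_nonneg_left (hbd t ht 2) hC.le
      have e3 : D * n t 3 ≤ D * B := mul_le_mul_of_nonneg_left (hbd t ht 3) hD.le
      rw [hKxdef]; linarith only [e0, e1, e2, e3]
    have hp1' : 0 ≤ n t 0 * (Kx - (C * (n t 0 + n t 1 + n t 2) + D * n t 3)) :=
      mul_nonneg h0.le (sub_nonneg.2 hsum)
    have hp2' : 0 ≤ n t 0 * (lam - mu) := mul_nonneg h0.le hlm'.le
    have hs1 : 0 < sig * n t 1 := mul_pos hsig h1
    have hs2 : 0 < r * n t 2 := mul_pos hr h2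
    nlinarith only [hp1', hp2', hs1, hs2]
  -- the key delayed-repulsion property
  have hii : ∀ s t, 0 ≤ s → s + T0 ≤ t → (∀ u ∈ Icc s t, n u 0 ≤ del) →
      0 ≤ n t 0 * (lam - mu - C * (n t 0 + n t 1 + n t 2) - D * n t 3) + sig * n t 1 + r * n t 2 := by
    intro s t hs hst hbelow
    have hstT : s + (D1 + D2) ≤ t := by rw [← hT0def]; exact hst
    have hst' : s ≤ t := by linarith only [hstT, hD1, hD2]
    have ht : 0 ≤ t := by linarith only [hs, hst']
    -- decay of uu = p z + w while x ≤ del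
    have hudecay : ∀ τ ∈ Icc s t, p * n τ 2 + n τ 3 ≤ U * Real.exp (al * (s - τ)) := by
      intro τ hτ
      have hτ0 : 0 ≤ τ := hs.trans hτ.1
      have hupper := ode_exp_upper (fun u => p * n u 2 + n u 3)
        (fun u => p * ((1 - q) * D * n u 0 * n u 3 - (r + v) * n u 2) +
          (m * v * n u 2 - (1 - q) * D * n u 0 * n u 3 - mu2 * n u 3))
        s τ al 0 hτ.1 hal
        (fun u hu => (((hz u (hs.trans hu.1)).const_mul p).add (hw u (hs.trans hu.1))))
        ?_
      · have hus : p * n s 2 + n s 3 ≤ U := by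
          have b2 : p * n s 2 ≤ p * B := mul_le_mul_of_nonneg_left (hbd s hs 2) hp0.le
          have b3 := hbd s hs 3
          rw [hUdef]; linarith only [b2, b3]
        have hexp := Real.exp_pos (al * (s - τ))
        simp only [zero_div] at hupper
        nlinarith only [hupper, hus, hexp]
      · intro u hu
        have hu0 : 0 ≤ u := hs.trans hu.1.le
        have h0 := hpos u hu0 0; have h2 := hpos u hu0 2; have h3 := hpos u hu0 3
        have hxdel : n u 0 ≤ del := hbelow u ⟨hu.1.le, hu.2.le.trans hτ.2⟩
        have hcoefw : (p - 1) * (1 - q) * D * n u 0 ≤ mu2 / 2 := by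
          have hdle : del ≤ mu2 / (2 * ((p - 1) * (1 - q) * D)) := by rw [hdeldef]; exact min_le_left _ _
          have hmul := mul_le_mul_of_nonneg_left (hxdel.trans hdle) hAden.le
          have heqq : (p - 1) * (1 - q) * D * (mu2 / (2 * ((p - 1) * (1 - q) * D))) = mu2 / 2 := by
            field_simp
          linarith only [hmul, heqq.le, heqq.ge]
        have halp : al * p ≤ r + v := by
          have hh : al ≤ (r + v) / p := by rw [haldef]; exact min_le_left _ _
          rw [le_div_iff₀ hp0] at hh
          linarith only [hh]
        have halmu : al ≤ mu2 / 2 := by rw [haldef]; exact min_le_right _ _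
        have hzc : (m * v - p * (r + v)) = -(r + v) := by
          rw [hpdef]; field_simp; ring
        have expand : p * ((1 - q) * D * n u 0 * n u 3 - (r + v) * n u 2) +
            (m * v * n u 2 - (1 - q) * D * n u 0 * n u 3 - mu2 * n u 3)
            = (m * v - p * (r + v)) * n u 2 + ((p - 1) * (1 - q) * D * n u 0 - mu2) * n u 3 := by
          ring
        rw [expand, hzc]
        have hterm1 : -(r + v) * n u 2 ≤ -(al * p) * n u 2 :=
          mul_le_mul_of_nonneg_right (by linarith only [halp]) h2.le
        have hterm2 : ((p - 1) * (1 - q) * D * n u 0 - mu2) * n u 3 ≤ (-al) * n u 3 := by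
          apply mul_le_mul_of_nonneg_right _ h3.le
          linarith only [hcoefw, halmu, hmu2]
        have hgoal : -(al * p) * n u 2 + (-al) * n u 3 = -al * (p * n u 2 + n u 3) + 0 := by ring
        linarith only [hterm1, hterm2, hgoal.le, hgoal.ge]
    -- consequence: z and w are ≤ eps1 on [s + D1, t]
    have hexpD1 : Real.exp (-(al * D1)) = eps1 / (U + eps1) := by
      have harg : (0:ℝ) < (U + eps1) / eps1 := by positivity
      have heq : al * D1 = Real.log ((U + eps1) / eps1) := by
        rw [hD1def]; field_simp
      rw [heq, Real.exp_neg, Real.exp_log harg, inv_div]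
    have hzw : ∀ τ, s + D1 ≤ τ → τ ≤ t → n τ 2 ≤ eps1 ∧ n τ 3 ≤ eps1 := by
      intro τ hτ1 hτ2
      have hτIcc : τ ∈ Icc s t := ⟨by linarith only [hτ1, hD1], hτ2⟩
      have hτ0 : 0 ≤ τ := hs.trans hτIcc.1
      have h2 := hpos τ hτ0 2; have h3 := hpos τ hτ0 3
      have hu := hudecay τ hτIcc
      have hee : Real.exp (al * (s - τ)) ≤ Real.exp (-(al * D1)) := by
        apply Real.exp_le_exp.2
        nlinarith only [hτ1, hal]
      have hUe : U * Real.exp (al * (s - τ)) ≤ eps1 := by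
        have hfrac : U / (U + eps1) ≤ 1 := by
          rw [div_le_one (by positivity)]; linarith only [heps1]
        have hc1 : U * Real.exp (al * (s - τ)) ≤ U * (eps1 / (U + eps1)) := by
          rw [← hexpD1]
          exact mul_le_mul_of_nonneg_left hee hU.le
        have hc2 : U * (eps1 / (U + eps1)) = eps1 * (U / (U + eps1)) := by ring
        have hc3 : eps1 * (U / (U + eps1)) ≤ eps1 * 1 :=
          mul_le_mul_of_nonneg_left hfrac heps1.le
        linarith only [hc1, hc2.le, hc2.ge, hc3]
      have hpz : n τ 2 ≤ p * n τ 2 := by nlinarith only [h2, hp1]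
      have hpz2 : 0 < p * n τ 2 := mul_pos hp0 h2
      exact ⟨by linarith only [hu, hUe, hpz, h3], by linarith only [hu, hUe, hpz2]⟩
    -- y is small at time t
    have hyt : n t 1 ≤ 2 * EY := by
      have hs1t : s + D1 ≤ t := by linarith only [hstT, hD2]
      have hupper := ode_exp_upper (fun u => n u 1)
        (fun u => q * D * n u 0 * n u 3 - (kap * mu + sig) * n u 1)
        (s + D1) t sig (q * D * B * eps1) hs1t hsig
        (fun u hu => hy u (by linarith only [hs, hD1, hu.1] : (0:ℝ) ≤ u))
        ?_
      · have hcsig : q * D * B * eps1 / sig ≤ EY := by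
          have he1 : eps1 ≤ sig * E / (6 * C * (q * D * B + 1)) := by rw [heps1def]; exact min_le_right _ _
          have hmul := mul_le_mul_of_nonneg_left he1
            (by positivity : (0:ℝ) ≤ q * D * B + 1)
          have heqq : (q * D * B + 1) * (sig * E / (6 * C * (q * D * B + 1))) = sig * E / (6 * C) := by
            field_simp
          have h2' : (q * D * B) * eps1 ≤ sig * E / (6 * C) := by
            nlinarith only [hmul, heqq.le, heps1]
          rw [div_le_iff₀ hsig]
          have heyq : EY * sig = sig * E / (6 * C) := by
            rw [hEYdef]; field_simp
          linarith only [h2', heyq.le, heyq.ge]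
        have hexpD2 : Real.exp (sig * (s + D1 - t)) ≤ EY / (B + EY) := by
          have harg : (0:ℝ) < (B + EY) / EY := by positivity
          have hsD2 : sig * D2 = Real.log ((B + EY) / EY) := by
            rw [hD2def]; field_simp
          have hmono : Real.exp (sig * (s + D1 - t)) ≤ Real.exp (-(sig * D2)) := by
            apply Real.exp_le_exp.2
            have hprod := mul_nonneg hsig.le (by linarith only [hstT] : (0:ℝ) ≤ t - (s + D1 + D2))
            nlinarith only [hprod]
          have heqe : Real.exp (-(sig * D2)) = EY / (B + EY) := by
            rw [hsD2, Real.exp_neg, Real.exp_log harg, inv_div]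
          linarith only [hmono, heqe.le, heqe.ge]
        have hy1B : n (s + D1) 1 ≤ B := hbd (s + D1) (by linarith only [hs, hD1]) 1
        have hcnn : 0 ≤ q * D * B * eps1 / sig := by positivity
        have hexp2pos := Real.exp_pos (sig * (s + D1 - t))
        have hterm : (n (s + D1) 1 - q * D * B * eps1 / sig) * Real.exp (sig * (s + D1 - t)) ≤ EY := by
          rcases le_or_gt (n (s + D1) 1 - q * D * B * eps1 / sig) 0 with hcs | hcs
          · nlinarith only [hcs, hexp2pos, hEY]
          · have hm1 : (n (s + D1) 1 - q * D * B * eps1 / sig) * Real.exp (sig * (s + D1 - t))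
                ≤ B * (EY / (B + EY)) :=
              mul_le_mul (by linarith only [hy1B, hcnn]) hexpD2 hexp2pos.le hB.le
            have hfrac : B / (B + EY) ≤ 1 := by
              rw [div_le_one (by positivity)]; linarith only [hEY]
            have hc2 : B * (EY / (B + EY)) = EY * (B / (B + EY)) := by ring
            have hc3 : EY * (B / (B + EY)) ≤ EY * 1 := mul_le_mul_of_nonneg_left hfrac hEY.le
            linarith only [hm1, hc2.le, hc2.ge, hc3]
        linarith only [hupper, hcsig, hterm]
      · intro u hu
        have hu0 : (0:ℝ) ≤ u := by linarith only [hs, hD1, hu.1]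
        have h3 := hpos u hu0 3
        have hw3 : n u 3 ≤ eps1 := (hzw u hu.1.le hu.2.le).2
        have hx0 : n u 0 ≤ B := hbd u hu0 0
        have h0 := hpos u hu0 0
        have h1 := hpos u hu0 1
        have hqq : q * D * n u 0 * n u 3 ≤ q * D * B * eps1 := by
          have step1 : q * D * n u 0 * n u 3 ≤ q * D * B * n u 3 :=
            mul_le_mul_of_nonneg_right
              (mul_le_mul_of_nonneg_left hx0 (by positivity)) h3.le
          have step2 : q * D * B * n u 3 ≤ q * D * B * eps1 :=
            mul_le_mul_of_nonneg_left hw3 (by positivity)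
          linarith only [step1, step2]
        have hky : 0 ≤ kap * mu * n u 1 := by positivity
        nlinarith only [hqq, hky]
    -- conclude: the derivative of x at time t is nonnegative
    have hxt := hbelow t ⟨hst', le_rfl⟩
    have h0 := hpos t ht 0
    have h1 := hpos t ht 1
    have h2' := hpos t ht 2
    have h2t : n t 2 ≤ eps1 := (hzw t (by linarith only [hstT, hD2]) le_rfl).1
    have h3t : n t 3 ≤ eps1 := (hzw t (by linarith only [hstT, hD2]) le_rfl).2
    have hbracket : 0 ≤ lam - mu - C * (n t 0 + n t 1 + n t 2) - D * n t 3 := by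
      have hCx : C * n t 0 ≤ (lam - mu) / 4 := by
        have hdle : del ≤ (lam - mu) / (4 * C) := by rw [hdeldef]; exact min_le_right _ _
        have hmul := mul_le_mul_of_nonneg_left (hxt.trans hdle) hC.le
        have heqq : C * ((lam - mu) / (4 * C)) = (lam - mu) / 4 := by field_simp
        linarith only [hmul, heqq.le, heqq.ge]
      have hCy : C * n t 1 ≤ E / 3 := by
        have hmul := mul_le_mul_of_nonneg_left hyt hC.le
        have heqq : C * (2 * EY) = E / 3 := by rw [hEYdef]; field_simp; ring
        linarith only [hmul, heqq.le, heqq.ge]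
      have he1 : eps1 ≤ E / (3 * (C + D)) := by rw [heps1def]; exact min_le_left _ _
      have hCz : C * n t 2 ≤ E / 3 := by
        have hmul := mul_le_mul_of_nonneg_left (h2t.trans he1) hC.le
        have hkey : C * (E / (3 * (C + D))) ≤ E / 3 := by
          rw [mul_div_assoc', div_le_div_iff₀ (by positivity) (by norm_num : (0:ℝ) < 3)]
          nlinarith only [mul_nonneg hD.le hE.le]
        linarith only [hmul, hkey]
      have hDw : D * n t 3 ≤ E / 3 := by
        have hmul := mul_le_mul_of_nonneg_left (h3t.trans he1) hD.le
        have hkey : D * (E / (3 * (C + D))) ≤ E / 3 := by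
          rw [mul_div_assoc', div_le_div_iff₀ (by positivity) (by norm_num : (0:ℝ) < 3)]
          nlinarith only [mul_nonneg hC.le hE.le]
        linarith only [hmul, hkey]
      have hEeq : E = (lam - mu) / 2 := hEdef
      linarith only [hCx, hCy, hCz, hDw, hEeq.le, hEeq.ge, hlm']
    have ha : 0 ≤ n t 0 * (lam - mu - C * (n t 0 + n t 1 + n t 2) - D * n t 3) :=
      mul_nonneg h0.le hbracket
    have hb1 := mul_pos hsig h1
    have hb2 := mul_pos hr h2'
    linarith only [ha, hb1, hb2]
  -- apply the repeller lemma
  have main := ode_repeller (fun s => n s 0) _ 0 del Kx T0 hdel hKx hT0 hx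
    (hpos 0 le_rfl 0) (fun t ht => (hpos t ht 0).le) hlow hii
  have hx0 := hpos 0 le_rfl 0
  exact ⟨min (n 0 0) del * Real.exp (-(Kx * T0)), by positivity, fun t ht => main t ht⟩

lemma aux_frac (a c K : ℝ) (ha : 0 ≤ a) (hc : 0 ≤ c) (hK : 0 < K) :
    a * (c / (K * (a + 1))) ≤ c / K := by
  have h1 : a / (a + 1) ≤ 1 := by
    rw [div_le_one (by linarith)]; linarith
  have heq : a * (c / (K * (a + 1))) = (a / (a + 1)) * (c / K) := by
    have h2 : a + (1:ℝ) ≠ 0 := by positivity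
    field_simp
  calc a * (c / (K * (a + 1))) = (a / (a + 1)) * (c / K) := heq
    _ ≤ 1 * (c / K) := mul_le_mul_of_nonneg_right h1 (by positivity)
    _ = c / K := one_mul _

set_option maxHeartbeats 2000000 in
lemma virus_persist (lam mu C D q kap sig r v mu2 m : ℝ)
    (hmu : 0 < mu) (hlm : mu < lam) (hC : 0 < C) (hD : 0 < D)
    (hq0 : 0 < q) (hq1 : q < 1) (hkap : 0 ≤ kap) (hsig : 0 < sig)
    (hr : 0 < r) (hv : 0 < v) (hmu2 : 0 < mu2) (hm : 0 < m)
    (hcoex : (m * v - (r + v)) * (1 - q) * D * ((lam - mu) / C) > mu2 * (r + v))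
    (n : ℝ → (Fin 4 → ℝ))
    (hx : ∀ t, 0 ≤ t → HasDerivAt (fun s => n s 0)
      (n t 0 * (lam - mu - C * (n t 0 + n t 1 + n t 2) - D * n t 3) + sig * n t 1 + r * n t 2) t)
    (hy : ∀ t, 0 ≤ t → HasDerivAt (fun s => n s 1)
      (q * D * n t 0 * n t 3 - (kap * mu + sig) * n t 1) t)
    (hz : ∀ t, 0 ≤ t → HasDerivAt (fun s => n s 2)
      ((1 - q) * D * n t 0 * n t 3 - (r + v) * n t 2) t)
    (hw : ∀ t, 0 ≤ t → HasDerivAt (fun s => n s 3)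
      (m * v * n t 2 - (1 - q) * D * n t 0 * n t 3 - mu2 * n t 3) t)
    (hpos : ∀ t, 0 ≤ t → ∀ i, 0 < n t i)
    (B : ℝ) (hB : 0 < B) (hbd : ∀ t, 0 ≤ t → ∀ i, n t i ≤ B)
    (eps0 : ℝ) (heps0 : 0 < eps0) (hxlow : ∀ t, 0 ≤ t → eps0 ≤ n t 0) :
    ∃ b cphi : ℝ, 0 < b ∧ 0 < cphi ∧ ∀ t, 0 ≤ t → cphi ≤ n t 2 + b * n t 3 := by
  have hlm' : (0:ℝ) < lam - mu := by linarith
  have h1q : (0:ℝ) < 1 - q := by linarith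
  have hrv : (0:ℝ) < r + v := by linarith
  have hmv : r + v < m * v := by
    by_contra hcon
    push_neg at hcon
    have h1 : (0:ℝ) < (1 - q) * D * ((lam - mu) / C) := by positivity
    nlinarith only [hcoex, hcon, h1, mul_pos hmu2 hrv]
  have hmv0 : (0:ℝ) < m * v := by linarith
  set b : ℝ := (r + v) / (m * v) with hbdef
  have hb0 : 0 < b := by positivity
  have hb1 : b < 1 := by rw [hbdef, div_lt_one hmv0]; exact hmv
  have hbmv : b * (m * v) = r + v := by rw [hbdef]; field_simp
  set nbar : ℝ := (lam - mu) / C with hnbardef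
  have hnbar : 0 < nbar := by positivity
  have hCnbar : C * nbar = lam - mu := by rw [hnbardef]; field_simp
  set A : ℝ := (m * v - (r + v)) * (1 - q) * D with hAdef
  have hA : 0 < A := by
    have hmv' : (0:ℝ) < m * v - (r + v) := by linarith
    rw [hAdef]; positivity
  set xstar : ℝ := mu2 * (r + v) / A with hxstardef
  have hxstar : 0 < xstar := by rw [hxstardef]; positivity
  have hxstar_lt : xstar < nbar := by
    rw [hxstardef, div_lt_iff₀ hA]
    calc mu2 * (r + v) < (m * v - (r + v)) * (1 - q) * D * ((lam - mu) / C) := hcoex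
      _ = nbar * A := by rw [hnbardef, hAdef]; ring
  have hmvne : m * v ≠ 0 := ne_of_gt hmv0
  have hmv'ne : m * v - (r + v) ≠ 0 := ne_of_gt (by linarith)
  have h1qne : (1:ℝ) - q ≠ 0 := ne_of_gt h1q
  have hDne : D ≠ 0 := ne_of_gt hD
  have hident : (1 - b) * (1 - q) * D * xstar = b * mu2 := by
    rw [hbdef, hxstardef, hAdef]
    field_simp
    ring_nf
    have hX : -v + v * m - r ≠ 0 := by intro h; apply hmv'ne; linarith
    rw [← sub_mul, ← sub_mul, mul_inv_eq_one₀ hX]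
    ring
  set gap : ℝ := (nbar - xstar) / 2 with hgapdef
  have hgap : 0 < gap := by rw [hgapdef]; linarith
  set xmid : ℝ := xstar + gap with hxmiddef
  have hxmid : 0 < xmid := by rw [hxmiddef]; linarith
  have hxmid_gap : nbar - xmid = gap := by rw [hxmiddef, hgapdef]; ring
  have hxmid_ge : xstar ≤ xmid := by rw [hxmiddef]; linarith
  set del' : ℝ := min (min (gap / 8) (b * (sig * gap / (16 * (q * D * B + 1)))))
      (C * gap * b / (8 * D)) with hdeldef
  have hdel' : 0 < del' := by
    refine lt_min (lt_min (by positivity) (by positivity)) (by positivity)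
  set G16 : ℝ := gap / 16 with hG16def
  have hG16 : 0 < G16 := by rw [hG16def]; positivity
  have hG16' : 2 * G16 ≤ gap / 8 := by rw [hG16def]; linarith
  set D3 : ℝ := Real.log ((B + G16) / G16) / sig with hD3def
  have hD3 : 0 ≤ D3 := by
    apply div_nonneg _ hsig.le
    apply Real.log_nonneg
    rw [le_div_iff₀ hG16]
    linarith
  set c1 : ℝ := eps0 * (C * gap / 2) with hc1def
  have hc1 : 0 < c1 := by rw [hc1def]; positivity
  set D4 : ℝ := xmid / c1 with hD4def
  have hD4 : 0 ≤ D4 := by rw [hD4def]; positivity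
  set T1 : ℝ := D3 + D4 with hT1def
  have hT1 : 0 ≤ T1 := by rw [hT1def]; linarith
  set Kphi : ℝ := (1 - q) * D * B + mu2 + r + v with hKphidef
  have hKphi : 0 ≤ Kphi := by
    have h' : 0 ≤ (1 - q) * D * B := by positivity
    rw [hKphidef]; linarith
  have hmu2K : mu2 ≤ Kphi := by
    have h' : 0 ≤ (1 - q) * D * B := by positivity
    rw [hKphidef]; linarith
  clear_value Kphi T1 D4 c1 D3 G16 del' xmid gap xstar A nbar b
  -- identity for the derivative of φ = z + b w
  have hFphi : ∀ u : ℝ, ((1 - q) * D * n u 0 * n u 3 - (r + v) * n u 2) +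
      b * (m * v * n u 2 - (1 - q) * D * n u 0 * n u 3 - mu2 * n u 3)
      = ((1 - b) * (1 - q) * D * n u 0 - b * mu2) * n u 3 + (b * (m * v) - (r + v)) * n u 2 := by
    intro u; ring
  have hbmv0 : b * (m * v) - (r + v) = 0 := by rw [hbmv]; ring
  -- lower bound for the derivative of φ
  have hlow : ∀ t, 0 ≤ t → -Kphi * (n t 2 + b * n t 3) ≤
      ((1 - q) * D * n t 0 * n t 3 - (r + v) * n t 2) +
      b * (m * v * n t 2 - (1 - q) * D * n t 0 * n t 3 - mu2 * n t 3) := by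
    intro t ht
    have h0 := hpos t ht 0; have h2 := hpos t ht 2; have h3 := hpos t ht 3
    rw [hFphi t, hbmv0]
    have hb1' : (0:ℝ) ≤ 1 - b := by linarith
    have ht1 : 0 ≤ (1 - b) * ((1 - q) * (D * (n t 0 * n t 3))) :=
      mul_nonneg hb1' (mul_nonneg h1q.le (mul_nonneg hD.le
        (mul_nonneg h0.le h3.le)))
    have e1 : 0 ≤ Kphi * n t 2 := mul_nonneg hKphi h2.le
    have e2 : b * mu2 * n t 3 ≤ Kphi * (b * n t 3) := by
      have h3b : 0 ≤ b * n t 3 := mul_nonneg hb0.le h3.le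
      calc b * mu2 * n t 3 = mu2 * (b * n t 3) := by ring
        _ ≤ Kphi * (b * n t 3) := mul_le_mul_of_nonneg_right hmu2K h3b
    nlinarith only [ht1, e1, e2]
  -- delayed repulsion for φ
  have hii : ∀ s t, 0 ≤ s → s + T1 ≤ t → (∀ u ∈ Icc s t, n u 2 + b * n u 3 ≤ del') →
      0 ≤ ((1 - q) * D * n t 0 * n t 3 - (r + v) * n t 2) +
      b * (m * v * n t 2 - (1 - q) * D * n t 0 * n t 3 - mu2 * n t 3) := by
    intro s t hs hst hbelow
    have hstT : s + (D3 + D4) ≤ t := by rw [← hT1def]; exact hst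
    have hst' : s ≤ t := by linarith only [hstT, hD3, hD4]
    have ht : 0 ≤ t := by linarith only [hs, hst']
    -- z and w are small on [s,t]
    have hzwsmall : ∀ u ∈ Icc s t, n u 2 ≤ del' ∧ n u 3 ≤ del' / b := by
      intro u hu
      have hu0 : 0 ≤ u := hs.trans hu.1
      have h2 := hpos u hu0 2; have h3 := hpos u hu0 3
      have hφ := hbelow u hu
      constructor
      · nlinarith only [hφ, mul_pos hb0 h3]
      · rw [le_div_iff₀ hb0]
        nlinarith only [hφ, h2]
    -- y is small on [s + D3, t]
    have hysmall : ∀ τ, s + D3 ≤ τ → τ ≤ t → n τ 1 ≤ gap / 8 := by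
      intro τ hτ1 hτ2
      have hsτ : s ≤ τ := by linarith only [hτ1, hD3]
      have hτ0 : 0 ≤ τ := hs.trans hsτ
      have hupper := ode_exp_upper (fun u => n u 1)
        (fun u => q * D * n u 0 * n u 3 - (kap * mu + sig) * n u 1)
        s τ sig (q * D * B * (del' / b)) hsτ hsig
        (fun u hu => hy u (hs.trans hu.1))
        ?_
      · have hcsig : q * D * B * (del' / b) / sig ≤ G16 := by
          have he1 : del' ≤ b * (sig * gap / (16 * (q * D * B + 1))) := by
            rw [hdeldef]; exact le_trans (min_le_left _ _) (min_le_right _ _)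
          have he2 : del' / b ≤ sig * gap / (16 * (q * D * B + 1)) := by
            rw [div_le_iff₀ hb0]
            calc del' ≤ b * (sig * gap / (16 * (q * D * B + 1))) := he1
              _ = sig * gap / (16 * (q * D * B + 1)) * b := by ring
          have he3 : q * D * B * (del' / b) ≤ q * D * B * (sig * gap / (16 * (q * D * B + 1))) :=
            mul_le_mul_of_nonneg_left he2 (by positivity)
          have he4 : q * D * B * (sig * gap / (16 * (q * D * B + 1))) ≤ sig * gap / 16 :=
            aux_frac (q * D * B) (sig * gap) 16 (by positivity) (by positivity)
              (by norm_num)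
          rw [div_le_iff₀ hsig]
          have he5 : G16 * sig = sig * gap / 16 := by rw [hG16def]; ring
          linarith only [he3, he4, he5.le, he5.ge]
        have hexpD3 : Real.exp (sig * (s - τ)) ≤ G16 / (B + G16) := by
          have harg : (0:ℝ) < (B + G16) / G16 := by positivity
          have hsD3 : sig * D3 = Real.log ((B + G16) / G16) := by
            rw [hD3def]; field_simp
          have hmono : Real.exp (sig * (s - τ)) ≤ Real.exp (-(sig * D3)) := by
            apply Real.exp_le_exp.2
            have hprod := mul_nonneg hsig.le (by linarith only [hτ1] : (0:ℝ) ≤ τ - (s + D3))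
            nlinarith only [hprod]
          have heqe : Real.exp (-(sig * D3)) = G16 / (B + G16) := by
            rw [hsD3, Real.exp_neg, Real.exp_log harg, inv_div]
          linarith only [hmono, heqe.le, heqe.ge]
        have hy1B : n s 1 ≤ B := hbd s hs 1
        have hcnn : 0 ≤ q * D * B * (del' / b) / sig := by positivity
        have hexp2pos := Real.exp_pos (sig * (s - τ))
        have hterm : (n s 1 - q * D * B * (del' / b) / sig) * Real.exp (sig * (s - τ)) ≤ G16 := by
          rcases le_or_gt (n s 1 - q * D * B * (del' / b) / sig) 0 with hcs | hcs
          · nlinarith only [hcs, hexp2pos, hG16]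
          · have hm1 : (n s 1 - q * D * B * (del' / b) / sig) * Real.exp (sig * (s - τ))
                ≤ B * (G16 / (B + G16)) :=
              mul_le_mul (by linarith only [hy1B, hcnn]) hexpD3 hexp2pos.le hB.le
            have hfrac : B / (B + G16) ≤ 1 := by
              rw [div_le_one (by positivity)]; linarith only [hG16]
            have hc2 : B * (G16 / (B + G16)) = G16 * (B / (B + G16)) := by ring
            have hc3 : G16 * (B / (B + G16)) ≤ G16 * 1 := mul_le_mul_of_nonneg_left hfrac hG16.le
            linarith only [hm1, hc2.le, hc2.ge, hc3]
        linarith only [hupper, hcsig, hterm, hG16', hG16]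
      · intro u hu
        have hu0 : (0:ℝ) ≤ u := hs.trans hu.1.le
        have h3 := hpos u hu0 3
        have hw3 : n u 3 ≤ del' / b := (hzwsmall u ⟨hu.1.le, hu.2.le.trans hτ2⟩).2
        have hx0 : n u 0 ≤ B := hbd u hu0 0
        have h1 := hpos u hu0 1
        have hqq : q * D * n u 0 * n u 3 ≤ q * D * B * (del' / b) := by
          have step1 : q * D * n u 0 * n u 3 ≤ q * D * B * n u 3 :=
            mul_le_mul_of_nonneg_right
              (mul_le_mul_of_nonneg_left hx0 (by positivity)) h3.le
          have step2 : q * D * B * n u 3 ≤ q * D * B * (del' / b) :=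
            mul_le_mul_of_nonneg_left hw3 (by positivity)
          linarith only [step1, step2]
        have hky : 0 ≤ kap * mu * n u 1 := by positivity
        nlinarith only [hqq, hky]
    -- x climbs back above xmid by time t
    have hreach : xmid ≤ n t 0 := by
      have hsD3 : (0:ℝ) ≤ s + D3 := by linarith only [hs, hD3]
      refine ode_reach (fun u => n u 0) _ (s + D3) t c1 xmid hc1
        (hpos (s + D3) hsD3 0).le (by linarith only [hstT, hD4]) ?_
        (fun u hu => hx u (hsD3.trans hu.1)) ?_
      · rw [← hD4def]; linarith only [hstT]
      · intro u hu hxu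
        have hu0 : (0:ℝ) ≤ u := hsD3.trans hu.1
        have h0 := hpos u hu0 0
        have h1 := hpos u hu0 1
        have h2 := hpos u hu0 2
        have hyu : n u 1 ≤ gap / 8 := hysmall u hu.1 hu.2
        have hzu : n u 2 ≤ del' := (hzwsmall u ⟨by linarith only [hu.1, hD3], hu.2⟩).1
        have hwu : n u 3 ≤ del' / b := (hzwsmall u ⟨by linarith only [hu.1, hD3], hu.2⟩).2
        have hzgap : n u 2 ≤ gap / 8 := by
          have : del' ≤ gap / 8 := by
            rw [hdeldef]; exact le_trans (min_le_left _ _) (min_le_left _ _)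
          linarith only [hzu, this]
        have hDw : D * n u 3 ≤ C * gap / 8 := by
          have hd3 : del' ≤ C * gap * b / (8 * D) := by
            rw [hdeldef]; exact min_le_right _ _
          have hd4 : del' / b ≤ C * gap / (8 * D) := by
            rw [div_le_div_iff₀ hb0 (by positivity : (0:ℝ) < 8 * D)] at *
            calc del' * (8 * D) ≤ C * gap * b / (8 * D) * (8 * D) := by
                  have := mul_le_mul_of_nonneg_right hd3 (by positivity : (0:ℝ) ≤ 8 * D)
                  linarith only [this]
              _ = C * gap * b := by field_simp
          have hd5 := mul_le_mul_of_nonneg_left (hwu.trans hd4) hD.le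
          have hd6 : D * (C * gap / (8 * D)) = C * gap / 8 := by field_simp
          linarith only [hd5, hd6.le, hd6.ge]
        have hbracket : C * gap / 2 ≤ lam - mu - C * (n u 0 + n u 1 + n u 2) - D * n u 3 := by
          have hCx : C * n u 0 ≤ C * xmid := mul_le_mul_of_nonneg_left hxu hC.le
          have hCy : C * n u 1 ≤ C * (gap / 8) := mul_le_mul_of_nonneg_left hyu hC.le
          have hCz : C * n u 2 ≤ C * (gap / 8) := mul_le_mul_of_nonneg_left hzgap hC.le
          have hgapeq : C * nbar - C * xmid = C * gap := by
            have := hxmid_gap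
            nlinarith only [this.le, this.ge, hC]
          have hCg : 0 ≤ C * gap := by positivity
          nlinarith only [hCx, hCy, hCz, hDw, hCnbar.le, hCnbar.ge, hgapeq.le, hgapeq.ge, hCg]
        have hfx : eps0 * (C * gap / 2) ≤
            n u 0 * (lam - mu - C * (n u 0 + n u 1 + n u 2) - D * n u 3) :=
          mul_le_mul (hxlow u hu0) hbracket (by positivity) h0.le
        have hsy : 0 ≤ sig * n u 1 := by positivity
        have hrz : 0 ≤ r * n u 2 := by positivity
        rw [hc1def]
        linarith only [hfx, hsy, hrz]
    -- conclude
    have h3t := hpos t ht 3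
    have h2t := hpos t ht 2
    rw [hFphi t, hbmv0]
    have hxge : (1 - b) * (1 - q) * D * xstar ≤ (1 - b) * (1 - q) * D * n t 0 := by
      apply mul_le_mul_of_nonneg_left _ (by
        have hb1' : (0:ℝ) ≤ 1 - b := by linarith
        positivity)
      linarith only [hreach, hxmid_ge]
    have hcoef : 0 ≤ (1 - b) * (1 - q) * D * n t 0 - b * mu2 := by
      linarith only [hxge, hident.le, hident.ge]
    have := mul_nonneg hcoef h3t.le
    nlinarith only [this]
  -- apply the repeller lemma to φ
  have hphif : ∀ t, (0:ℝ) ≤ t → HasDerivAt (fun s => n s 2 + b * n s 3)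
      (((1 - q) * D * n t 0 * n t 3 - (r + v) * n t 2) +
        b * (m * v * n t 2 - (1 - q) * D * n t 0 * n t 3 - mu2 * n t 3)) t := by
    intro t ht
    exact (hz t ht).add ((hw t ht).const_mul b)
  have hphi0 : 0 < n 0 2 + b * n 0 3 := by
    have h2 := hpos 0 le_rfl 2; have h3 := hpos 0 le_rfl 3
    nlinarith only [h2, mul_pos hb0 h3]
  have hphipos : ∀ t, (0:ℝ) ≤ t → 0 ≤ n t 2 + b * n t 3 := by
    intro t ht
    have h2 := hpos t ht 2; have h3 := hpos t ht 3
    nlinarith only [h2, mul_pos hb0 h3]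
  have main := ode_repeller (fun s => n s 2 + b * n s 3) _ 0 del' Kphi T1 hdel' hKphi hT1
    hphif hphi0 hphipos hlow hii
  exact ⟨b, min (n 0 2 + b * n 0 3) del' * Real.exp (-(Kphi * T1)), hb0,
    by positivity, fun t ht => main t ht⟩


set_option maxHeartbeats 2000000 in
theorem uniform_strong_persistence
    (lam mu C D q kap sig r v mu2 m : ℝ)
    (hmu : 0 < mu) (hlm : mu < lam) (hC : 0 < C) (hD : 0 < D)
    (hq0 : 0 < q) (hq1 : q < 1) (hkap : 0 ≤ kap) (hsig : 0 < sig)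
    (hr : 0 < r) (hv : 0 < v) (hmu2 : 0 < mu2) (hm : 0 < m)
    (hcoex : (m * v - (r + v)) * (1 - q) * D * ((lam - mu) / C) > mu2 * (r + v))
    (n : ℝ → (Fin 4 → ℝ))
    (hderiv : ∀ t : ℝ, 0 ≤ t → HasDerivAt n (hostVirusField lam mu C D q kap sig r v mu2 m (n t)) t)
    (hinit : ∀ i, 0 < n 0 i) :
    ∀ j : Fin 4, 0 < Filter.liminf (fun t : ℝ => n t j) atTop := by
  have h1q : (0:ℝ) < 1 - q := by linarith
  -- coordinate derivatives
  have hx : ∀ t, (0:ℝ) ≤ t → HasDerivAt (fun s => n s 0)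
      (n t 0 * (lam - mu - C * (n t 0 + n t 1 + n t 2) - D * n t 3) + sig * n t 1 + r * n t 2) t := by
    intro t ht
    have := (hasDerivAt_pi.mp (hderiv t ht)) 0
    simpa [hostVirusField] using this
  have hy : ∀ t, (0:ℝ) ≤ t → HasDerivAt (fun s => n s 1)
      (q * D * n t 0 * n t 3 - (kap * mu + sig) * n t 1) t := by
    intro t ht
    have := (hasDerivAt_pi.mp (hderiv t ht)) 1
    simpa [hostVirusField] using this
  have hz : ∀ t, (0:ℝ) ≤ t → HasDerivAt (fun s => n s 2)
      ((1 - q) * D * n t 0 * n t 3 - (r + v) * n t 2) t := by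
    intro t ht
    have := (hasDerivAt_pi.mp (hderiv t ht)) 2
    simpa [hostVirusField] using this
  have hw : ∀ t, (0:ℝ) ≤ t → HasDerivAt (fun s => n s 3)
      (m * v * n t 2 - (1 - q) * D * n t 0 * n t 3 - mu2 * n t 3) t := by
    intro t ht
    have := (hasDerivAt_pi.mp (hderiv t ht)) 3
    simpa [hostVirusField] using this
  have hcont : ∀ (i : Fin 4), ∀ t : ℝ, 0 ≤ t → ContinuousAt (fun s => n s i) t := by
    intro i t ht
    exact ((hasDerivAt_pi.mp (hderiv t ht)) i).continuousAt
  -- positivity, boundedness, persistence of the host, persistence of φ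
  have hpos := positivity_aux lam mu C D q kap sig r v mu2 m hmu hlm hC hD hq0 hq1 hkap hsig
    hr hv hmu2 hm n hcont hx hy hz hw hinit
  obtain ⟨B, hB, hbd⟩ := bounds_aux lam mu C D q kap sig r v mu2 m hmu hlm hC hD hq0 hq1 hkap
    hsig hr hv hmu2 hm n hx hy hz hw hpos
  obtain ⟨eps0, heps0, hxlow⟩ := host_persist lam mu C D q kap sig r v mu2 m hmu hlm hC hD hq0
    hq1 hkap hsig hr hv hmu2 hm n hx hy hz hw hpos B hB hbd
  obtain ⟨b, cphi, hb0, hcphi, hphilow⟩ := virus_persist lam mu C D q kap sig r v mu2 m hmu hlm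
    hC hD hq0 hq1 hkap hsig hr hv hmu2 hm hcoex n hx hy hz hw hpos B hB hbd eps0 heps0 hxlow
  -- persistence of the infected class z
  have hwlow : ∀ u, (0:ℝ) ≤ u → n u 2 ≤ cphi / 2 → cphi / (2 * b) ≤ n u 3 := by
    intro u hu hz2
    have hφ := hphilow u hu
    rw [div_le_iff₀ (by positivity : (0:ℝ) < 2 * b)]
    nlinarith only [hφ, hz2]
  set A2 : ℝ := (1 - q) * D * eps0 * (cphi / (2 * b)) with hA2def
  have hA2 : 0 < A2 := by rw [hA2def]; positivity
  set lz : ℝ := min (cphi / 2) (A2 / (2 * (r + v))) with hlzdef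
  have hlz : 0 < lz := lt_min (by positivity) (by positivity)
  set c2 : ℝ := A2 / 2 with hc2def
  have hc2 : 0 < c2 := by rw [hc2def]; positivity
  set Tz : ℝ := lz / c2 with hTzdef
  have hTz0 : 0 ≤ Tz := by rw [hTzdef]; positivity
  clear_value A2 lz c2 Tz
  have hzper : ∀ t, Tz ≤ t → lz ≤ n t 2 := by
    intro t htz
    have ht0 : 0 ≤ t := hTz0.trans htz
    refine ode_reach (fun u => n u 2) _ 0 t c2 lz hc2 (hpos 0 le_rfl 2).le ht0
      (by rw [← hTzdef]; linarith only [htz]) (fun u hu => hz u hu.1) ?_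
    intro u hu hzu
    have hu0 := hu.1
    have hwl : cphi / (2 * b) ≤ n u 3 :=
      hwlow u hu0 (le_trans hzu (by rw [hlzdef]; exact min_le_left _ _))
    have hxl : eps0 ≤ n u 0 := hxlow u hu0
    have hcoefnn : 0 ≤ (1 - q) * D * n u 0 :=
      mul_nonneg (mul_nonneg h1q.le hD.le) (hpos u hu0 0).le
    have hprod : A2 ≤ (1 - q) * D * n u 0 * n u 3 := by
      rw [hA2def]
      have s1 : (1 - q) * D * eps0 ≤ (1 - q) * D * n u 0 :=
        mul_le_mul_of_nonneg_left hxl (by positivity)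
      calc (1 - q) * D * eps0 * (cphi / (2 * b))
          ≤ (1 - q) * D * n u 0 * (cphi / (2 * b)) :=
            mul_le_mul_of_nonneg_right s1 (by positivity)
        _ ≤ (1 - q) * D * n u 0 * n u 3 := mul_le_mul_of_nonneg_left hwl hcoefnn
    have hrv2 : (r + v) * n u 2 ≤ (r + v) * lz :=
      mul_le_mul_of_nonneg_left hzu (by positivity)
    have hlz2 : (r + v) * lz ≤ A2 / 2 := by
      have hm1 : lz ≤ A2 / (2 * (r + v)) := by rw [hlzdef]; exact min_le_right _ _
      have hm2 := mul_le_mul_of_nonneg_left hm1 (by positivity : (0:ℝ) ≤ r + v)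
      have heq : (r + v) * (A2 / (2 * (r + v))) = A2 / 2 := by field_simp
      linarith only [hm2, heq.le, heq.ge]
    rw [hc2def]
    linarith only [hprod, hrv2, hlz2]
  -- persistence of the free virus w
  set Kw : ℝ := (1 - q) * D * B + mu2 with hKwdef
  have hKw : 0 < Kw := by rw [hKwdef]; positivity
  set lw : ℝ := m * v * lz / (2 * Kw) with hlwdef
  have hlw : 0 < lw := by rw [hlwdef]; positivity
  set c3 : ℝ := m * v * lz / 2 with hc3def
  have hc3 : 0 < c3 := by rw [hc3def]; positivity
  set Tw : ℝ := Tz + lw / c3 with hTwdef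
  have hTw0 : 0 ≤ Tw := by rw [hTwdef]; positivity
  have hKwlw : Kw * lw = m * v * lz / 2 := by
    rw [hlwdef]; field_simp
  clear_value Kw lw c3 Tw
  have hwper : ∀ t, Tw ≤ t → lw ≤ n t 3 := by
    intro t htw
    have ht0 : 0 ≤ t := hTw0.trans htw
    have htzt : Tz ≤ t := by
      rw [hTwdef] at htw
      have : 0 ≤ lw / c3 := by positivity
      linarith only [htw, this]
    refine ode_reach (fun u => n u 3) _ Tz t c3 lw hc3 (hpos Tz hTz0 3).le htzt
      (by rw [hTwdef] at htw; linarith only [htw]) (fun u hu => hw u (hTz0.trans hu.1)) ?_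
    intro u hu hwu
    have hu0 : 0 ≤ u := hTz0.trans hu.1
    have h3 := hpos u hu0 3
    have hzl : lz ≤ n u 2 := hzper u hu.1
    have e1 : m * v * lz ≤ m * v * n u 2 := mul_le_mul_of_nonneg_left hzl (by positivity)
    have s1 : (1 - q) * D * n u 0 ≤ (1 - q) * D * B :=
      mul_le_mul_of_nonneg_left (hbd u hu0 0) (by positivity)
    have s2 : (1 - q) * D * n u 0 * n u 3 ≤ (1 - q) * D * B * n u 3 :=
      mul_le_mul_of_nonneg_right s1 h3.le
    have s3 : (1 - q) * D * B * n u 3 ≤ (1 - q) * D * B * lw :=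
      mul_le_mul_of_nonneg_left hwu (by positivity)
    have s4 : mu2 * n u 3 ≤ mu2 * lw := mul_le_mul_of_nonneg_left hwu hmu2.le
    have hKweq : (1 - q) * D * B * lw + mu2 * lw = Kw * lw := by rw [hKwdef]; ring
    rw [hc3def]
    linarith only [e1, s2, s3, s4, hKweq.le, hKweq.ge, hKwlw.le, hKwlw.ge]
  -- persistence of the dormant class y
  set Ky : ℝ := kap * mu + sig with hKydef
  have hKy : 0 < Ky := by
    have : 0 ≤ kap * mu := mul_nonneg hkap hmu.le
    rw [hKydef]; linarith
  set ly : ℝ := q * D * eps0 * lw / (2 * Ky) with hlydef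
  have hly : 0 < ly := by rw [hlydef]; positivity
  set c4 : ℝ := q * D * eps0 * lw / 2 with hc4def
  have hc4 : 0 < c4 := by rw [hc4def]; positivity
  set Ty : ℝ := Tw + ly / c4 with hTydef
  have hTy0 : 0 ≤ Ty := by rw [hTydef]; positivity
  have hKyly : Ky * ly = q * D * eps0 * lw / 2 := by
    rw [hlydef]; field_simp
  clear_value Ky ly c4 Ty
  have hyper : ∀ t, Ty ≤ t → ly ≤ n t 1 := by
    intro t hty
    have ht0 : 0 ≤ t := hTy0.trans hty
    have htwt : Tw ≤ t := by
      rw [hTydef] at hty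
      have : 0 ≤ ly / c4 := by positivity
      linarith only [hty, this]
    refine ode_reach (fun u => n u 1) _ Tw t c4 ly hc4 (hpos Tw hTw0 1).le htwt
      (by rw [hTydef] at hty; linarith only [hty]) (fun u hu => hy u (hTw0.trans hu.1)) ?_
    intro u hu hyu
    have hu0 : 0 ≤ u := hTw0.trans hu.1
    have h1 := hpos u hu0 1
    have hwl : lw ≤ n u 3 := hwper u hu.1
    have hxl : eps0 ≤ n u 0 := hxlow u hu0
    have s1 : q * D * eps0 ≤ q * D * n u 0 := mul_le_mul_of_nonneg_left hxl (by positivity)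
    have s2 : q * D * eps0 * lw ≤ q * D * n u 0 * lw :=
      mul_le_mul_of_nonneg_right s1 hlw.le
    have s3 : q * D * n u 0 * lw ≤ q * D * n u 0 * n u 3 :=
      mul_le_mul_of_nonneg_left hwl
        (mul_nonneg (mul_nonneg hq0.le hD.le) (hpos u hu0 0).le)
    have s4 : Ky * n u 1 ≤ Ky * ly := mul_le_mul_of_nonneg_left hyu hKy.le
    have hKyeq : (kap * mu + sig) * n u 1 = Ky * n u 1 := by rw [hKydef]
    rw [hc4def]
    linarith only [s2, s3, s4, hKyeq.le, hKyeq.ge, hKyly.le, hKyly.ge]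
  -- conclusion via liminf
  have liminf_pos : ∀ (j : Fin 4) (c T : ℝ), 0 < c → (∀ t, T ≤ t → c ≤ n t j) →
      0 < Filter.liminf (fun t : ℝ => n t j) atTop := by
    intro j c T hc hper
    have hbd' : IsBoundedUnder (· ≤ ·) atTop (fun t : ℝ => n t j) := by
      refine isBoundedUnder_of_eventually_le (a := B) ?_
      filter_upwards [eventually_ge_atTop (0:ℝ)] with t ht
      exact hbd t ht j
    have hcob := hbd'.isCoboundedUnder_ge
    have hev : ∀ᶠ t in atTop, c ≤ n t j := by
      filter_upwards [eventually_ge_atTop T] with t ht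
      exact hper t ht
    exact lt_of_lt_of_le hc (Filter.le_liminf_of_le hcob hev)
  intro j
  fin_cases j
  · exact liminf_pos 0 eps0 0 heps0 hxlow
  · exact liminf_pos 1 ly Ty hly hyper
  · exact liminf_pos 2 lz Tz hlz hzper
  · exact liminf_pos 3 lw Tw hlw hwper
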